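/- For every integer m ≥ 50, either m - 15 is a sum of three squares of nonnegative integers, or 2m - 99 is a sum of three squares of nonnegative integers. -/

import Mathlib

set_option maxHeartbeats 1000000

/-- round: choice of x making |a*x + w| ≤ a/2 (integer version). -/
lemma my_round_lemma (a w : ℤ) (ha : 0 < a) : ∃ x : ℤ, (2*(a*x + w))^2 ≤ a^2 := by
  have h := Int.emod_nonneg w (by omega : a ≠ 0)
  have h2 := Int.emod_lt_of_pos w ha
  have hdiv := Int.emod_add_mul_ediv w a
  set r := w % a with hr
  set q := w / a with hq
  rcases le_or_gt (2*r) a with hc | hc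
  · refine ⟨-q, ?_⟩
    have : a * -q + w = r := by linarith [hdiv]
    rw [this]
    nlinarith
  · refine ⟨-q - 1, ?_⟩
    have : a * (-q - 1) + w = r - a := by linarith [hdiv]
    rw [this]
    nlinarith

/-- extraction of a minimum for positive-integer-valued predicates. -/
lemma my_exists_min (P : ℤ → Prop) (hex : ∃ t, P t) (hpos : ∀ t, P t → 0 < t) :
    ∃ μ : ℤ, P μ ∧ 0 < μ ∧ ∀ t, P t → μ ≤ t := by
  classical
  obtain ⟨t0, ht0⟩ := hex
  have hQ : ∃ k : ℕ, P (k : ℤ) := ⟨t0.toNat, by rwa [Int.toNat_of_nonneg (hpos t0 ht0).le]⟩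
  refine ⟨(Nat.find hQ : ℤ), Nat.find_spec hQ, hpos _ (Nat.find_spec hQ), ?_⟩
  intro t ht
  have h1 : (t.toNat : ℤ) = t := Int.toNat_of_nonneg (hpos t ht).le
  have := Nat.find_min' hQ (m := t.toNat) (by rwa [h1])
  omega

/-- Binary form minimum bound: pos def binary form with det M has min μ with 3μ² ≤ 4M,
    attained at a coprime vector. -/
lemma my_binary_min (B C F M : ℤ) (hdet : B*C - F^2 = M) (hM : 0 < M)
    (hpos : ∀ y z : ℤ, ¬(y = 0 ∧ z = 0) → 0 < B*y^2 + 2*F*y*z + C*z^2) :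
    ∃ μ : ℤ, 0 < μ ∧ (∀ y z : ℤ, ¬(y = 0 ∧ z = 0) → μ ≤ B*y^2 + 2*F*y*z + C*z^2)
      ∧ 3*μ^2 ≤ 4*M ∧ ∃ y z : ℤ, IsCoprime y z ∧ B*y^2 + 2*F*y*z + C*z^2 = μ := by
  obtain ⟨μ, ⟨⟨y0, z0, hnz, hval⟩, hμpos, hmin⟩⟩ :=
    my_exists_min (fun t => ∃ y z : ℤ, ¬(y = 0 ∧ z = 0) ∧ B*y^2 + 2*F*y*z + C*z^2 = t)
      ⟨B*1^2 + 2*F*1*0 + C*0^2, 1, 0, by simp, rfl⟩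
      (fun t ⟨y, z, hnz, hval⟩ => hval ▸ hpos y z hnz)
  -- primitivize
  have hgpos0 : 0 < Int.gcd y0 z0 := Int.gcd_pos_iff.mpr (by tauto)
  set t : ℤ := (Int.gcd y0 z0 : ℤ) with hts
  have hgpos : 0 < t := by rw [hts]; exact_mod_cast hgpos0
  obtain ⟨y1, hy1⟩ : t ∣ y0 := Int.gcd_dvd_left y0 z0
  obtain ⟨z1, hz1⟩ : t ∣ z0 := Int.gcd_dvd_right y0 z0
  have hnz1 : ¬(y1 = 0 ∧ z1 = 0) := by
    rintro ⟨rfl, rfl⟩; simp at hy1 hz1; tauto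
  have hfac : B*y1^2 + 2*F*y1*z1 + C*z1^2 > 0 := hpos y1 z1 hnz1
  have hval1 : t^2 * (B*y1^2 + 2*F*y1*z1 + C*z1^2) = μ := by
    rw [hy1, hz1] at hval; rw [← hval]; ring
  have hmin1 : μ ≤ B*y1^2 + 2*F*y1*z1 + C*z1^2 := hmin _ ⟨y1, z1, hnz1, rfl⟩
  have ht1 : t = 1 := by nlinarith [sq_nonneg (t - 1), sq_nonneg (t + 1)]
  have hμval : B*y1^2 + 2*F*y1*z1 + C*z1^2 = μ := by rw [← hval1, ht1]; ring
  have hcop : IsCoprime y1 z1 := by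
    rw [Int.isCoprime_iff_gcd_eq_one]
    have h1 : y0 = y1 := by rw [hy1, ht1]; ring
    have h2 : z0 = z1 := by rw [hz1, ht1]; ring
    rw [← h1, ← h2]
    exact_mod_cast (by rw [← hts, ht1] : ((Int.gcd y0 z0 : ℤ)) = 1)
  -- Bezout: y1 * δ - z1 * γ = 1
  obtain ⟨A, Bz, hAB⟩ := id hcop
  -- A * y1 + Bz * z1 = 1 ; take δ := A, γ := -Bz
  obtain ⟨δ, hδ⟩ : ∃ δ : ℤ, δ = A := ⟨_, rfl⟩
  obtain ⟨γ, hγ⟩ : ∃ γ : ℤ, γ = -Bz := ⟨_, rfl⟩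
  have hbez : y1 * δ - z1 * γ = 1 := by rw [hδ, hγ]; linarith [hAB]
  -- transformed form H'(u,v) = H(y1 u + γ v, z1 u + δ v): B' = μ
  obtain ⟨F', hF'⟩ : ∃ F' : ℤ, F' = B*y1*γ + C*z1*δ + F*(y1*δ + z1*γ) := ⟨_, rfl⟩
  obtain ⟨C', hC'⟩ : ∃ C' : ℤ, C' = B*γ^2 + 2*F*γ*δ + C*δ^2 := ⟨_, rfl⟩
  have hdet' : μ * C' - F'^2 = M := by
    have h0 : (B*y1^2 + 2*F*y1*z1 + C*z1^2) * C' - F'^2 = (B*C - F^2) * (y1*δ - z1*γ)^2 := by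
      rw [hC', hF']; ring
    rw [hμval, hbez, hdet] at h0; simpa using h0
  obtain ⟨x, hx⟩ := my_round_lemma μ F' hμpos
  have himnz : ¬(y1*x + γ = 0 ∧ z1*x + δ = 0) := by
    rintro ⟨h1, h2⟩
    have : y1 * δ - z1 * γ = 0 := by
      have hγ0 : γ = -(y1*x) := by linarith
      have hδ0 : δ = -(z1*x) := by linarith
      rw [hγ0, hδ0]; ring
    omega
  have hvx : B*(y1*x + γ)^2 + 2*F*(y1*x + γ)*(z1*x + δ) + C*(z1*x + δ)^2
      = μ*x^2 + 2*F'*x + C' := by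
    rw [← hμval, hF', hC']; ring
  have hge : μ ≤ μ*x^2 + 2*F'*x + C' := by
    rw [← hvx]; exact hmin _ ⟨_, _, himnz, rfl⟩
  have hkey : μ * (μ*x^2 + 2*F'*x + C') = (μ*x + F')^2 + M := by
    rw [← hdet']; ring
  have h3 : 3*μ^2 ≤ 4*M := by
    have e1 : μ*μ ≤ μ*(μ*x^2 + 2*F'*x + C') := mul_le_mul_of_nonneg_left hge hμpos.le
    have e2 : 4*(μ*x + F')^2 ≤ μ^2 := by
      have h4 : (2*(μ*x + F'))^2 = 4*(μ*x + F')^2 := by ring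
      linarith [hx]
    have e3 : μ*μ ≤ (μ*x + F')^2 + M := by rw [← hkey]; exact e1
    have e4 : μ*μ = μ^2 := by ring
    clear_value t
    clear hkey e1 hx hge hval hval1 hmin hmin1 hμval hdet' hpos hdet hF' hC' hfac
    linarith
  exact ⟨μ, hμpos, fun y z hnz => hmin _ ⟨y, z, hnz, rfl⟩, h3, y1, z1, hcop, hμval⟩


/-- A positive-definite integer binary form of determinant 1 takes only sums of two squares
    as values. -/
lemma my_binary_split (B C F : ℤ) (hdet : B*C - F^2 = 1)
    (hpos : ∀ y z : ℤ, ¬(y = 0 ∧ z = 0) → 0 < B*y^2 + 2*F*y*z + C*z^2) :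
    ∀ y z : ℤ, ∃ u v : ℤ, B*y^2 + 2*F*y*z + C*z^2 = u^2 + v^2 := by
  obtain ⟨μ, hμpos, hmin, h3, y0, z0, hcop, hval⟩ := my_binary_min B C F 1 hdet one_pos hpos
  have hμ1 : μ = 1 := by nlinarith
  obtain ⟨A, Bz, hAB⟩ := id hcop
  obtain ⟨δ, hδ⟩ : ∃ δ : ℤ, δ = A := ⟨_, rfl⟩
  obtain ⟨γ, hγ⟩ : ∃ γ : ℤ, γ = -Bz := ⟨_, rfl⟩
  have hbez : y0 * δ - z0 * γ = 1 := by rw [hδ, hγ]; linarith [hAB]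
  obtain ⟨F', hF'⟩ : ∃ F' : ℤ, F' = B*y0*γ + C*z0*δ + F*(y0*δ + z0*γ) := ⟨_, rfl⟩
  obtain ⟨C', hC'⟩ : ∃ C' : ℤ, C' = B*γ^2 + 2*F*γ*δ + C*δ^2 := ⟨_, rfl⟩
  have hB' : B*y0^2 + 2*F*y0*z0 + C*z0^2 = 1 := by rw [hval, hμ1]
  have hdet' : C' - F'^2 = 1 := by
    have h0 : (B*y0^2 + 2*F*y0*z0 + C*z0^2) * C' - F'^2 = (B*C - F^2) * (y0*δ - z0*γ)^2 := by
      rw [hC', hF']; ring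
    rw [hB', hbez, hdet] at h0; simpa using h0
  intro y z
  -- inverse transform: (u, v) = (δ*y - γ*z, -z0*y + y0*z)
  refine ⟨(δ*y - γ*z) + F'*(-z0*y + y0*z), -z0*y + y0*z, ?_⟩
  have hy : y0*(δ*y - γ*z) + γ*(-z0*y + y0*z) = y := by linear_combination y * hbez
  have hz : z0*(δ*y - γ*z) + δ*(-z0*y + y0*z) = z := by linear_combination z * hbez
  have hQ : B*y^2 + 2*F*y*z + C*z^2
      = (B*y0^2 + 2*F*y0*z0 + C*z0^2)*(δ*y - γ*z)^2 + 2*F'*(δ*y - γ*z)*(-z0*y + y0*z)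
        + C'*(-z0*y + y0*z)^2 := by
    rw [hF', hC']
    linear_combination (-(B*y^2 + 2*F*y*z + C*z^2) * (y0*δ - z0*γ + 1)) * hbez
  rw [hQ, hB']
  linear_combination ((-z0*y + y0*z)^2) * hdet'

/-- A pos-def integer ternary form of determinant 1 whose minimum is at (1,0,0)
    takes only sums of three squares as values. -/
lemma my_ternary_reduced (a b c d e g : ℤ)
    (hdet : a*b*c + 2*d*e*g - a*g^2 - b*e^2 - c*d^2 = 1)
    (hpos : ∀ x y z : ℤ, ¬(x = 0 ∧ y = 0 ∧ z = 0) →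
      0 < a*x^2 + b*y^2 + c*z^2 + 2*d*x*y + 2*e*x*z + 2*g*y*z)
    (hmin : ∀ x y z : ℤ, ¬(x = 0 ∧ y = 0 ∧ z = 0) →
      a ≤ a*x^2 + b*y^2 + c*z^2 + 2*d*x*y + 2*e*x*z + 2*g*y*z) :
    ∀ x y z : ℤ, ∃ X Y Z : ℤ,
      a*x^2 + b*y^2 + c*z^2 + 2*d*x*y + 2*e*x*z + 2*g*y*z = X^2 + Y^2 + Z^2 := by
  have ha : 0 < a := by have := hpos 1 0 0 (by simp); linarith [this]
  obtain ⟨B, hB⟩ : ∃ B : ℤ, B = a*b - d^2 := ⟨_, rfl⟩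
  obtain ⟨C, hC⟩ : ∃ C : ℤ, C = a*c - e^2 := ⟨_, rfl⟩
  obtain ⟨F, hF⟩ : ∃ F : ℤ, F = a*g - d*e := ⟨_, rfl⟩
  have hsplit : ∀ x y z : ℤ, a * (a*x^2 + b*y^2 + c*z^2 + 2*d*x*y + 2*e*x*z + 2*g*y*z)
      = (a*x + d*y + e*z)^2 + (B*y^2 + 2*F*y*z + C*z^2) := by
    intro x y z; rw [hB, hC, hF]; ring
  have hdetH : B*C - F^2 = a := by
    rw [hB, hC, hF]; linear_combination a * hdet
  have hHlb : ∀ y z : ℤ, ¬(y = 0 ∧ z = 0) → 3*a^2 ≤ 4*(B*y^2 + 2*F*y*z + C*z^2) := by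
    intro y z hnz
    obtain ⟨x, hx⟩ := my_round_lemma a (d*y + e*z) ha
    have h1 := hmin x y z (by tauto)
    have h2 := hsplit x y z
    have h4 : (2*(a*x + (d*y + e*z)))^2 = 4*(a*x + d*y + e*z)^2 := by ring
    nlinarith [h1, h2, hx]
  have hHpos : ∀ y z : ℤ, ¬(y = 0 ∧ z = 0) → 0 < B*y^2 + 2*F*y*z + C*z^2 := by
    intro y z hnz; have := hHlb y z hnz; nlinarith [this]
  obtain ⟨μ, hμpos, hminH, h3, y0, z0, hcop, hval⟩ := my_binary_min B C F a hdetH ha hHpos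
  have hμlb : 3*a^2 ≤ 4*μ := by
    have hnz : ¬(y0 = 0 ∧ z0 = 0) := by
      rintro ⟨rfl, rfl⟩
      exact not_isCoprime_zero_zero hcop
    have := hHlb y0 z0 hnz
    linarith [hval]
  have ha1 : a = 1 := by nlinarith [hμlb, h3, hμpos, ha]
  -- now a = 1 : split off the square
  have hdetH1 : B*C - F^2 = 1 := by rw [hdetH, ha1]
  obtain hsplit2 := my_binary_split B C F hdetH1 hHpos
  intro x y z
  obtain ⟨u, v, huv⟩ := hsplit2 y z
  refine ⟨a*x + d*y + e*z, u, v, ?_⟩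
  have h2 := hsplit x y z
  rw [ha1] at h2 ⊢
  simp only [one_mul] at h2 ⊢
  rw [h2, huv]; ring

/-- A pos-def integer ternary form of determinant 1 takes only sums of three squares
    as values. -/
lemma my_ternary_main (a b c d e g : ℤ)
    (hdet : a*b*c + 2*d*e*g - a*g^2 - b*e^2 - c*d^2 = 1)
    (hpos : ∀ x y z : ℤ, ¬(x = 0 ∧ y = 0 ∧ z = 0) →
      0 < a*x^2 + b*y^2 + c*z^2 + 2*d*x*y + 2*e*x*z + 2*g*y*z)
    (n : ℤ)
    (hrep : ∃ x y z : ℤ, a*x^2 + b*y^2 + c*z^2 + 2*d*x*y + 2*e*x*z + 2*g*y*z = n) :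
    ∃ X Y Z : ℤ, n = X^2 + Y^2 + Z^2 := by
  -- minimum of the form
  obtain ⟨μ, ⟨⟨x0, y0, z0, hnz, hval⟩, hμpos, hmin⟩⟩ :=
    my_exists_min (fun t => ∃ x y z : ℤ, ¬(x = 0 ∧ y = 0 ∧ z = 0) ∧
        a*x^2 + b*y^2 + c*z^2 + 2*d*x*y + 2*e*x*z + 2*g*y*z = t)
      ⟨a*1^2 + b*0^2 + c*0^2 + 2*d*1*0 + 2*e*1*0 + 2*g*0*0, 1, 0, 0, by simp, rfl⟩
      (fun t ⟨x, y, z, hnz, hval⟩ => hval ▸ hpos x y z hnz)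
  -- primitivize the minimal vector
  have hgpos0 : 0 < Int.gcd (Int.gcd x0 y0 : ℤ) z0 := by
    rw [Int.gcd_pos_iff]
    rcases not_and_or.mp hnz with h | h
    · left; intro hc
      rcases Int.gcd_eq_zero_iff.mp (by exact_mod_cast hc) with ⟨h1, h2⟩
      exact hnz ⟨h1, h2, by tauto⟩
    · rcases not_and_or.mp h with h | h
      · left; intro hc
        rcases Int.gcd_eq_zero_iff.mp (by exact_mod_cast hc) with ⟨h1, h2⟩
        exact hnz ⟨h1, h2, by tauto⟩
      · right; exact h
  obtain ⟨t, hts⟩ : ∃ t : ℤ, t = (Int.gcd (Int.gcd x0 y0 : ℤ) z0 : ℤ) := ⟨_, rfl⟩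
  have hgpos : 0 < t := by rw [hts]; exact_mod_cast hgpos0
  have htx : t ∣ x0 := hts ▸ dvd_trans (Int.gcd_dvd_left _ _) (Int.gcd_dvd_left _ _)
  have hty : t ∣ y0 := hts ▸ dvd_trans (Int.gcd_dvd_left _ _) (Int.gcd_dvd_right _ _)
  have htz : t ∣ z0 := hts ▸ Int.gcd_dvd_right _ _
  obtain ⟨x1, hx1⟩ := htx
  obtain ⟨y1, hy1⟩ := hty
  obtain ⟨z1, hz1⟩ := htz
  have hnz1 : ¬(x1 = 0 ∧ y1 = 0 ∧ z1 = 0) := by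
    rintro ⟨rfl, rfl, rfl⟩; simp at hx1 hy1 hz1; tauto
  have hval1 : t^2 * (a*x1^2 + b*y1^2 + c*z1^2 + 2*d*x1*y1 + 2*e*x1*z1 + 2*g*y1*z1) = μ := by
    rw [hx1, hy1, hz1] at hval; rw [← hval]; ring
  have hmin1 : μ ≤ a*x1^2 + b*y1^2 + c*z1^2 + 2*d*x1*y1 + 2*e*x1*z1 + 2*g*y1*z1 :=
    hmin _ ⟨x1, y1, z1, hnz1, rfl⟩
  have hfac1 : 0 < a*x1^2 + b*y1^2 + c*z1^2 + 2*d*x1*y1 + 2*e*x1*z1 + 2*g*y1*z1 :=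
    hpos _ _ _ hnz1
  have ht1 : t = 1 := by nlinarith [sq_nonneg (t - 1), sq_nonneg (t + 1)]
  have hex0 : x0 = x1 := by rw [hx1, ht1]; ring
  have hey0 : y0 = y1 := by rw [hy1, ht1]; ring
  have hez0 : z0 = z1 := by rw [hz1, ht1]; ring
  rw [← hex0, ← hey0, ← hez0] at hval1 hmin1 hfac1 hnz1
  have hcop3 : Int.gcd (Int.gcd x0 y0 : ℤ) z0 = 1 := by
    have : ((Int.gcd (Int.gcd x0 y0 : ℤ) z0 : ℤ)) = 1 := by rw [← hts, ht1]
    exact_mod_cast this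
  -- completion to a unimodular matrix with first column (x0, y0, z0)
  have hcompl : ∃ u12 u13 u22 u23 u32 u33 : ℤ,
      x0*(u22*u33 - u23*u32) - u12*(y0*u33 - u23*z0) + u13*(y0*u32 - u22*z0) = 1 := by
    rcases Nat.eq_zero_or_pos (Int.gcd x0 y0) with hg0 | hg0
    · -- x0 = y0 = 0, z0 = ±1
      obtain ⟨hx00, hy00⟩ := Int.gcd_eq_zero_iff.mp hg0
      have hz02 : z0 * z0 = 1 := by
        rw [hg0] at hcop3
        have h1 : z0.natAbs = 1 := by simpa [Int.gcd] using hcop3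
        rcases Int.natAbs_eq_iff.mp h1 with h | h <;> rw [h] <;> ring
      exact ⟨1, 0, 0, z0, 0, 0, by rw [hx00, hy00]; linear_combination hz02⟩
    · -- general case with Bezout twice
      obtain ⟨G, hG⟩ : ∃ G : ℤ, G = (Int.gcd x0 y0 : ℤ) := ⟨_, rfl⟩
      have hGpos : 0 < G := by rw [hG]; exact_mod_cast hg0
      obtain ⟨p, hp⟩ : G ∣ x0 := hG ▸ Int.gcd_dvd_left x0 y0
      obtain ⟨q, hq⟩ : G ∣ y0 := hG ▸ Int.gcd_dvd_right x0 y0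
      obtain ⟨α, hα⟩ : ∃ α : ℤ, α = Int.gcdA x0 y0 := ⟨_, rfl⟩
      obtain ⟨β, hβ⟩ : ∃ β : ℤ, β = Int.gcdB x0 y0 := ⟨_, rfl⟩
      have hbez1 : x0 * α + y0 * β = G := by
        rw [hG, hα, hβ]; exact (Int.gcd_eq_gcd_ab x0 y0).symm
      have hbez1' : p * α + q * β = 1 := by
        have h0 : G * (p * α + q * β) = G * 1 := by
          rw [hp, hq] at hbez1; linarith [hbez1]
        exact mul_left_cancel₀ (by omega) h0
      have hbez2 : G * Int.gcdA G z0 + z0 * Int.gcdB G z0 = 1 := by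
        have := Int.gcd_eq_gcd_ab G z0
        rw [hG] at this ⊢
        rw [← this]; exact_mod_cast hcop3
      obtain ⟨γ, hγ⟩ : ∃ γ : ℤ, γ = Int.gcdA G z0 := ⟨_, rfl⟩
      obtain ⟨δ, hδ⟩ : ∃ δ : ℤ, δ = Int.gcdB G z0 := ⟨_, rfl⟩
      rw [← hγ, ← hδ] at hbez2
      refine ⟨-β, -δ*p, α, -δ*q, 0, γ, ?_⟩
      rw [hp, hq]
      linear_combination (G*γ + z0*δ) * hbez1' + hbez2
  obtain ⟨u12, u13, u22, u23, u32, u33, hU⟩ := hcompl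
  -- transformed coefficients
  obtain ⟨a', ha'⟩ : ∃ v : ℤ, v = a*x0^2 + b*y0^2 + c*z0^2 + 2*d*x0*y0 + 2*e*x0*z0 + 2*g*y0*z0 :=
    ⟨_, rfl⟩
  obtain ⟨b', hb'⟩ : ∃ v : ℤ, v = a*u12^2 + b*u22^2 + c*u32^2 + 2*d*u12*u22 + 2*e*u12*u32
      + 2*g*u22*u32 := ⟨_, rfl⟩
  obtain ⟨c', hc'⟩ : ∃ v : ℤ, v = a*u13^2 + b*u23^2 + c*u33^2 + 2*d*u13*u23 + 2*e*u13*u33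
      + 2*g*u23*u33 := ⟨_, rfl⟩
  obtain ⟨d', hd'⟩ : ∃ v : ℤ, v = a*x0*u12 + b*y0*u22 + c*z0*u32 + d*(x0*u22 + y0*u12)
      + e*(x0*u32 + z0*u12) + g*(y0*u32 + z0*u22) := ⟨_, rfl⟩
  obtain ⟨e', he'⟩ : ∃ v : ℤ, v = a*x0*u13 + b*y0*u23 + c*z0*u33 + d*(x0*u23 + y0*u13)
      + e*(x0*u33 + z0*u13) + g*(y0*u33 + z0*u23) := ⟨_, rfl⟩
  obtain ⟨g', hg'⟩ : ∃ v : ℤ, v = a*u12*u13 + b*u22*u23 + c*u32*u33 + d*(u12*u23 + u22*u13)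
      + e*(u12*u33 + u32*u13) + g*(u22*u33 + u32*u23) := ⟨_, rfl⟩
  -- value identity
  have hQ' : ∀ X Y Z : ℤ, a'*X^2 + b'*Y^2 + c'*Z^2 + 2*d'*X*Y + 2*e'*X*Z + 2*g'*Y*Z
      = a*(x0*X + u12*Y + u13*Z)^2 + b*(y0*X + u22*Y + u23*Z)^2 + c*(z0*X + u32*Y + u33*Z)^2
        + 2*d*(x0*X + u12*Y + u13*Z)*(y0*X + u22*Y + u23*Z)
        + 2*e*(x0*X + u12*Y + u13*Z)*(z0*X + u32*Y + u33*Z)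
        + 2*g*(y0*X + u22*Y + u23*Z)*(z0*X + u32*Y + u33*Z) := by
    intro X Y Z
    rw [ha', hb', hc', hd', he', hg']; ring
  -- injectivity of the transformation
  have hinj : ∀ X Y Z : ℤ, ¬(X = 0 ∧ Y = 0 ∧ Z = 0) →
      ¬(x0*X + u12*Y + u13*Z = 0 ∧ y0*X + u22*Y + u23*Z = 0 ∧ z0*X + u32*Y + u33*Z = 0) := by
    rintro X Y Z hXYZ ⟨h1, h2, h3⟩
    refine hXYZ ⟨?_, ?_, ?_⟩
    · linear_combination (u22*u33 - u23*u32) * h1 - (u12*u33 - u13*u32) * h2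
        + (u12*u23 - u13*u22) * h3 - X * hU
    · linear_combination -(y0*u33 - u23*z0) * h1 + (x0*u33 - u13*z0) * h2
        - (x0*u23 - u13*y0) * h3 - Y * hU
    · linear_combination (y0*u32 - u22*z0) * h1 - (x0*u32 - u12*z0) * h2
        + (x0*u22 - u12*y0) * h3 - Z * hU
  -- determinant of the transformed form
  have hdet' : a'*b'*c' + 2*d'*e'*g' - a'*g'^2 - b'*e'^2 - c'*d'^2 = 1 := by
    rw [ha', hb', hc', hd', he', hg']
    linear_combination
      ((x0*(u22*u33 - u23*u32) - u12*(y0*u33 - u23*z0) + u13*(y0*u32 - u22*z0))^2) * hdet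
      + ((x0*(u22*u33 - u23*u32) - u12*(y0*u33 - u23*z0) + u13*(y0*u32 - u22*z0)) + 1) * hU
  -- positivity and minimality of the transformed form
  have hpos' : ∀ X Y Z : ℤ, ¬(X = 0 ∧ Y = 0 ∧ Z = 0) →
      0 < a'*X^2 + b'*Y^2 + c'*Z^2 + 2*d'*X*Y + 2*e'*X*Z + 2*g'*Y*Z := by
    intro X Y Z h
    rw [hQ']
    exact hpos _ _ _ (hinj X Y Z h)
  have hmin' : ∀ X Y Z : ℤ, ¬(X = 0 ∧ Y = 0 ∧ Z = 0) →
      a' ≤ a'*X^2 + b'*Y^2 + c'*Z^2 + 2*d'*X*Y + 2*e'*X*Z + 2*g'*Y*Z := by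
    intro X Y Z h
    rw [hQ']
    have : a' = μ := by rw [ha', hval]
    rw [this]
    exact hmin _ ⟨_, _, _, hinj X Y Z h, rfl⟩
  -- apply the reduced lemma and transfer
  obtain ⟨x, y, z, hxyz⟩ := hrep
  have hsolve : ∃ X Y Z : ℤ, x0*X + u12*Y + u13*Z = x ∧ y0*X + u22*Y + u23*Z = y
      ∧ z0*X + u32*Y + u33*Z = z := by
    refine ⟨(u22*u33 - u23*u32)*x - (u12*u33 - u13*u32)*y + (u12*u23 - u13*u22)*z,
      -(y0*u33 - u23*z0)*x + (x0*u33 - u13*z0)*y - (x0*u23 - u13*y0)*z,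
      (y0*u32 - u22*z0)*x - (x0*u32 - u12*z0)*y + (x0*u22 - u12*y0)*z, ?_, ?_, ?_⟩
    · linear_combination x * hU
    · linear_combination y * hU
    · linear_combination z * hU
  obtain ⟨W1, W2, W3, hW1, hW2, hW3⟩ := hsolve
  obtain ⟨X, Y, Z, hfin⟩ := my_ternary_reduced a' b' c' d' e' g' hdet' hpos' hmin' W1 W2 W3
  refine ⟨X, Y, Z, ?_⟩
  rw [← hxyz, ← hW1, ← hW2, ← hW3, ← hQ' W1 W2 W3]
  exact hfin

/-- Dirichlet wrapper -/
lemma my_dirichlet (q A : ℕ) (hq : 0 < q) (hcop : Nat.Coprime A q) :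
    ∃ p : ℕ, p.Prime ∧ 2 < p ∧ p % q = A % q := by
  haveI : NeZero q := ⟨hq.ne'⟩
  have hunit : IsUnit ((A : ℕ) : ZMod q) := (ZMod.isUnit_iff_coprime A q).mpr hcop
  obtain ⟨p, hgt, hp, heq⟩ := Nat.forall_exists_prime_gt_and_eq_mod hunit 2
  exact ⟨p, hp, hgt, (ZMod.natCast_eq_natCast_iff' p A q).mp heq⟩

/-- from a Jacobi symbol value, a square root of -D mod p, where n*D ≡ 1 mod p -/
lemma my_sqrt_neg (p : ℕ) (hp : p.Prime) (nn : ℕ) (D : ℤ)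
    (hD : (p : ℤ) ∣ (nn : ℤ) * D - 1)
    (hJ : jacobiSym (-(nn : ℤ)) p = 1) : ∃ s : ℤ, (p : ℤ) ∣ s^2 + D := by
  haveI : Fact p.Prime := ⟨hp⟩
  obtain ⟨r, hr⟩ := ZMod.isSquare_of_jacobiSym_eq_one hJ
  have hinv : ((nn : ℤ) * D - 1 : ℤ) = ((nn : ℤ) * D - 1 : ℤ) := rfl
  have hinv' : (((nn : ℤ) * D - 1 : ℤ) : ZMod p) = 0 :=
    (ZMod.intCast_zmod_eq_zero_iff_dvd _ p).mpr hD
  push_cast at hinv' hr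
  refine ⟨((r * ((D : ℤ) : ZMod p)).val : ℤ), ?_⟩
  rw [← ZMod.intCast_zmod_eq_zero_iff_dvd]
  push_cast
  rw [ZMod.natCast_val, ZMod.cast_id]
  linear_combination (-(((D : ℤ) : ZMod p))^2) * hr - ((D : ℤ) : ZMod p) * hinv'

/-- coprimality helper: A odd and Bezout with nn gives coprime to 4nn -/
lemma my_coprime_4n (A nn : ℕ) (hodd : A % 2 = 1) (hbez : ∃ u v : ℤ, u * A + v * nn = 1) :
    Nat.Coprime A (4 * nn) := by
  have h2 : Nat.Coprime A 2 := Nat.coprime_two_right.mpr (Nat.odd_iff.mpr hodd)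
  have h4 : Nat.Coprime A 4 := by
    have := h2.pow_right 2
    norm_num at this
    exact this
  have hnn : Nat.Coprime A nn := by
    obtain ⟨u, v, huv⟩ := hbez
    have hic : IsCoprime (A : ℤ) (nn : ℤ) := ⟨u, v, huv⟩
    have := Int.isCoprime_iff_gcd_eq_one.mp hic
    rwa [Int.gcd_natCast_natCast] at this
  exact h4.mul_right hnn


lemma my_package (nn : ℕ) (h3 : 3 ≤ nn) (hmod : nn % 4 = 1 ∨ nn % 4 = 2 ∨ nn % 8 = 3) :
    ∃ D N s k : ℤ, 1 ≤ D ∧ 2 ≤ N ∧ N*k = s^2 + D ∧ (nn : ℤ)*D = N + 1 := by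
  have hmod' : nn % 4 = 1 ∨ nn % 4 = 2 ∨ nn % 8 = 3 := hmod
  -- the odd cases use modulus 4*nn and a residue A
  rcases hmod with h1 | h2 | h3'
  · -- nn % 4 = 1, A = 2*nn - 1, N = p
    have hnn5 : 5 ≤ nn := by omega
    set A : ℕ := 2*nn - 1 with hA
    have hcop : Nat.Coprime A (4*nn) := by
      refine my_coprime_4n A nn (by omega) ⟨-1, 2, ?_⟩
      rw [hA]
      push_cast [Nat.cast_sub (by omega : 1 ≤ 2*nn)]
      ring
    obtain ⟨p, hp, hp2, hpm⟩ := my_dirichlet (4*nn) A (by omega) hcop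
    have hpodd : Odd p := hp.odd_of_ne_two (by omega)
    have h4 : p % 4 = A % 4 := by
      rw [← Nat.mod_mod_of_dvd p (⟨nn, by ring⟩ : (4:ℕ) ∣ 4*nn), hpm,
        Nat.mod_mod_of_dvd A (⟨nn, by ring⟩ : (4:ℕ) ∣ 4*nn)]
    have hp4 : p % 4 = 1 := by omega
    have hnmod : p % nn = A % nn := by
      rw [← Nat.mod_mod_of_dvd p (⟨4, by ring⟩ : nn ∣ 4*nn), hpm,
        Nat.mod_mod_of_dvd A (⟨4, by ring⟩ : nn ∣ 4*nn)]
    have hAnn : A % nn = nn - 1 := by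
      rw [show A = nn + (nn-1) by omega, Nat.add_mod_left, Nat.mod_eq_of_lt (by omega)]
    have hdvdN : nn ∣ p + 1 := by
      apply Nat.dvd_of_mod_eq_zero
      rw [Nat.add_mod, hnmod, hAnn, Nat.mod_eq_of_lt (by omega : 1 < nn),
        show nn - 1 + 1 = nn by omega, Nat.mod_self]
    obtain ⟨Dn, hDn⟩ := hdvdN
    have hD1 : 1 ≤ Dn := by
      rcases Nat.eq_zero_or_pos Dn with h | h
      · rw [h, Nat.mul_zero] at hDn; omega
      · exact h
    have hDnz : (p : ℤ) + 1 = (nn : ℤ) * (Dn : ℤ) := by exact_mod_cast hDn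
    have hInt : (p : ℤ) % nn = (-1) % nn := by
      rw [show (p : ℤ) = -1 + (nn : ℤ) * Dn by linarith]
      exact Int.add_mul_emod_self_left ..
    have hnodd : Odd nn := Nat.odd_iff.mpr (by omega)
    have j1 : jacobiSym (-1) p = 1 := by
      rw [jacobiSym.at_neg_one hpodd, ZMod.χ₄_nat_one_mod_four hp4]
    have j2 : jacobiSym nn p = jacobiSym p nn :=
      jacobiSym.quadratic_reciprocity_one_mod_four h1 hpodd
    have j3 : jacobiSym (p : ℤ) nn = jacobiSym (-1) nn := jacobiSym.mod_left' hInt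
    have j4 : jacobiSym (-1) nn = 1 := by
      rw [jacobiSym.at_neg_one hnodd, ZMod.χ₄_nat_one_mod_four h1]
    have hJ : jacobiSym (-(nn : ℤ)) p = 1 := by
      rw [show (-(nn : ℤ)) = -1 * nn by ring, jacobiSym.mul_left, j1, one_mul, j2, j3, j4]
    obtain ⟨s, hs⟩ := my_sqrt_neg p hp nn (Dn : ℤ) ⟨1, by linarith⟩ hJ
    obtain ⟨k, hk⟩ := hs
    exact ⟨(Dn : ℤ), (p : ℤ), s, k, by exact_mod_cast hD1, by exact_mod_cast hp2.le,
      by linarith, by linarith⟩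
  · -- nn % 4 = 2, A = nn - 1, N = p
    have hnn6 : 6 ≤ nn := by omega
    set A : ℕ := nn - 1 with hA
    have hcop : Nat.Coprime A (4*nn) := by
      refine my_coprime_4n A nn (by omega) ⟨-1, 1, ?_⟩
      rw [hA]
      push_cast [Nat.cast_sub (by omega : 1 ≤ nn)]
      ring
    obtain ⟨p, hp, hp2, hpm⟩ := my_dirichlet (4*nn) A (by omega) hcop
    have hpodd : Odd p := hp.odd_of_ne_two (by omega)
    have h8 : p % 8 = A % 8 := by
      rw [← Nat.mod_mod_of_dvd p (⟨nn/2, by omega⟩ : (8:ℕ) ∣ 4*nn), hpm,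
        Nat.mod_mod_of_dvd A (⟨nn/2, by omega⟩ : (8:ℕ) ∣ 4*nn)]
    have hp4 : p % 4 = 1 := by omega
    have hnmod : p % nn = A % nn := by
      rw [← Nat.mod_mod_of_dvd p (⟨4, by ring⟩ : nn ∣ 4*nn), hpm,
        Nat.mod_mod_of_dvd A (⟨4, by ring⟩ : nn ∣ 4*nn)]
    have hAnn : A % nn = nn - 1 := Nat.mod_eq_of_lt (by omega)
    have hdvdN : nn ∣ p + 1 := by
      apply Nat.dvd_of_mod_eq_zero
      rw [Nat.add_mod, hnmod, hAnn, Nat.mod_eq_of_lt (by omega : 1 < nn),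
        show nn - 1 + 1 = nn by omega, Nat.mod_self]
    obtain ⟨Dn, hDn⟩ := hdvdN
    have hD1 : 1 ≤ Dn := by
      rcases Nat.eq_zero_or_pos Dn with h | h
      · rw [h, Nat.mul_zero] at hDn; omega
      · exact h
    have hDnz : (p : ℤ) + 1 = (nn : ℤ) * (Dn : ℤ) := by exact_mod_cast hDn
    -- nn = 2 * nn'
    set nn' : ℕ := nn / 2 with hnn'
    have hnneq : nn = 2 * nn' := by omega
    have hn'odd : Odd nn' := Nat.odd_iff.mpr (by omega)
    have hInt' : (p : ℤ) % nn' = (-1) % nn' := by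
      rw [show (p : ℤ) = -1 + (nn' : ℤ) * (2 * Dn) by
        have hcast : (nn : ℤ) = 2 * nn' := by exact_mod_cast hnneq
        linear_combination hDnz + (Dn : ℤ) * hcast]
      exact Int.add_mul_emod_self_left ..
    have j1 : jacobiSym (-1) p = 1 := by
      rw [jacobiSym.at_neg_one hpodd, ZMod.χ₄_nat_one_mod_four hp4]
    have j3 : jacobiSym nn' p = jacobiSym p nn' :=
      jacobiSym.quadratic_reciprocity_one_mod_four' hn'odd hp4
    have j4 : jacobiSym (p : ℤ) nn' = jacobiSym (-1) nn' := jacobiSym.mod_left' hInt'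
    have hJ : jacobiSym (-(nn : ℤ)) p = 1 := by
      have hsplit : (-(nn : ℤ)) = -1 * (2 * nn') := by
        have : (nn : ℤ) = 2 * nn' := by exact_mod_cast hnneq
        linarith
      rw [hsplit, jacobiSym.mul_left, j1, one_mul,
        show ((2 : ℤ) * nn') = (2 : ℤ) * (nn' : ℤ) by push_cast; ring,
        jacobiSym.mul_left, j3, j4, jacobiSym.at_two hpodd, jacobiSym.at_neg_one hn'odd]
      rcases (by omega : nn % 8 = 2 ∨ nn % 8 = 6) with hc | hc
      · have hp8 : p % 8 = 1 := by omega
        have hn'4 : nn' % 4 = 1 := by omega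
        rw [ZMod.χ₈_nat_mod_eight, hp8, ZMod.χ₄_nat_one_mod_four hn'4]
        decide
      · have hp8 : p % 8 = 5 := by omega
        have hn'4 : nn' % 4 = 3 := by omega
        rw [ZMod.χ₈_nat_mod_eight, hp8, ZMod.χ₄_nat_three_mod_four hn'4]
        decide
    obtain ⟨s, hs⟩ := my_sqrt_neg p hp nn (Dn : ℤ) ⟨1, by linarith⟩ hJ
    obtain ⟨k, hk⟩ := hs
    exact ⟨(Dn : ℤ), (p : ℤ), s, k, by exact_mod_cast hD1, by exact_mod_cast hp2.le,
      by linarith, by linarith⟩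
  · -- nn % 8 = 3, A = nn / 2, N = 2 * p
    set A : ℕ := nn / 2 with hA
    have hA2 : 2 * A + 1 = nn := by omega
    have hA4 : A % 4 = 1 := by omega
    have hcop : Nat.Coprime A (4*nn) := by
      refine my_coprime_4n A nn (by omega) ⟨-2, 1, ?_⟩
      have : ((2 * A + 1 : ℕ) : ℤ) = (nn : ℤ) := by exact_mod_cast hA2
      push_cast at this ⊢
      linarith
    obtain ⟨p, hp, hp2, hpm⟩ := my_dirichlet (4*nn) A (by omega) hcop
    have hpodd : Odd p := hp.odd_of_ne_two (by omega)
    have h4 : p % 4 = A % 4 := by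
      rw [← Nat.mod_mod_of_dvd p (⟨nn, by ring⟩ : (4:ℕ) ∣ 4*nn), hpm,
        Nat.mod_mod_of_dvd A (⟨nn, by ring⟩ : (4:ℕ) ∣ 4*nn)]
    have hp4 : p % 4 = 1 := by omega
    have hnmod : p % nn = A % nn := by
      rw [← Nat.mod_mod_of_dvd p (⟨4, by ring⟩ : nn ∣ 4*nn), hpm,
        Nat.mod_mod_of_dvd A (⟨4, by ring⟩ : nn ∣ 4*nn)]
    have hAnn : A % nn = A := Nat.mod_eq_of_lt (by omega)
    have hpeq : (p : ℤ) = (nn : ℤ) * ((p / nn : ℕ) : ℤ) + (A : ℤ) := by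
      have := Nat.div_add_mod p nn
      rw [hnmod, hAnn] at this
      exact_mod_cast this.symm
    have hnnz : ((nn : ℕ) : ℤ) = 2 * (A : ℤ) + 1 := by exact_mod_cast hA2.symm
    have hdvd2 : (2 : ℤ) * p + 1 = (nn : ℤ) * (2 * ((p / nn : ℕ) : ℤ) + 1) := by
      linear_combination 2 * hpeq + ((2 * ((p / nn : ℕ) : ℤ) + 1) - 2*((p / nn : ℕ) : ℤ)) * hnnz.symm
    set D : ℤ := 2 * ((p / nn : ℕ) : ℤ) + 1 with hD
    have hD1 : 1 ≤ D := by
      have : 0 ≤ ((p / nn : ℕ) : ℤ) := Int.natCast_nonneg _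
      omega
    have hDodd : Odd D := ⟨((p / nn : ℕ) : ℤ), by ring⟩
    -- Jacobi: J(A | nn) = 1
    have hnodd : Odd nn := Nat.odd_iff.mpr (by omega)
    have hn4 : nn % 4 = 3 := by omega
    have e1 : jacobiSym ((2 : ℤ) * A) nn = jacobiSym 2 nn * jacobiSym A nn :=
      jacobiSym.mul_left 2 A nn
    have e2 : jacobiSym ((2 : ℤ) * A) nn = jacobiSym (-1) nn := by
      apply jacobiSym.mod_left'
      rw [show (2 : ℤ) * A = -1 + (nn : ℤ) * 1 by linarith [hnnz]]
      exact Int.add_mul_emod_self_left ..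
    have e3 : jacobiSym (-1) nn = -1 := by
      rw [jacobiSym.at_neg_one hnodd, ZMod.χ₄_nat_three_mod_four hn4]
    have e4 : jacobiSym 2 nn = -1 := by
      rw [jacobiSym.at_two hnodd, ZMod.χ₈_nat_mod_eight, h3']
      decide
    have jA : jacobiSym A nn = 1 := by
      rw [e2, e3] at e1; rw [e4] at e1; linarith
    have j1 : jacobiSym (-1) p = 1 := by
      rw [jacobiSym.at_neg_one hpodd, ZMod.χ₄_nat_one_mod_four hp4]
    have j2 : jacobiSym nn p = jacobiSym p nn :=
      jacobiSym.quadratic_reciprocity_one_mod_four' hnodd hp4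
    have j3 : jacobiSym (p : ℤ) nn = jacobiSym (A : ℤ) nn := by
      apply jacobiSym.mod_left'
      rw [hpeq]
      rw [show (nn : ℤ) * ((p / nn : ℕ) : ℤ) + (A : ℤ) = (A : ℤ) + (nn : ℤ) * ((p / nn : ℕ) : ℤ) by ring]
      exact Int.add_mul_emod_self_left ..
    have hJ : jacobiSym (-(nn : ℤ)) p = 1 := by
      rw [show (-(nn : ℤ)) = -1 * nn by ring, jacobiSym.mul_left, j1, one_mul, j2, j3, jA]
    have hDdvd : (p : ℤ) ∣ (nn : ℤ) * D - 1 := ⟨2, by linarith [hdvd2]⟩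
    obtain ⟨s, hs⟩ := my_sqrt_neg p hp nn D hDdvd hJ
    -- fix parity of s
    have hsfix : ∃ s' : ℤ, Odd s' ∧ (p : ℤ) ∣ s'^2 + D := by
      rcases Int.even_or_odd s with he | ho
      · refine ⟨s + p, ?_, ?_⟩
        · rcases hpodd with ⟨t, ht⟩
          rcases he with ⟨u, hu⟩
          exact ⟨u + t, by push_cast [ht]; linarith⟩
        · have : (s + p)^2 + D = (s^2 + D) + (p : ℤ) * (2*s + p) := by ring
          rw [this]
          exact dvd_add hs ⟨2*s + p, rfl⟩
      · exact ⟨s, ho, hs⟩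
    obtain ⟨s', hs'odd, hs'dvd⟩ := hsfix
    have h2dvd : (2 : ℤ) ∣ s'^2 + D := by
      rcases (hs'odd.pow : Odd (s'^2)) with ⟨u, hu⟩
      rcases hDodd with ⟨v, hv⟩
      exact ⟨u + v + 1, by rw [hu, hv]; ring⟩
    have hcop2p : IsCoprime (2 : ℤ) (p : ℤ) := by
      rcases hpodd with ⟨t, ht⟩
      exact ⟨-t, 1, by push_cast [ht]; ring⟩
    have h2pdvd : (2 * (p : ℤ)) ∣ s'^2 + D := hcop2p.mul_dvd h2dvd hs'dvd
    obtain ⟨k, hk⟩ := h2pdvd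
    refine ⟨D, 2 * (p : ℤ), s', k, hD1, by push_cast; omega, by linarith, by linarith [hdvd2]⟩

lemma my_main3sq (n : ℤ) (h3 : 3 ≤ n) (hmod : n % 4 = 1 ∨ n % 4 = 2 ∨ n % 8 = 3) :
    ∃ x y z : ℤ, 0 ≤ x ∧ 0 ≤ y ∧ 0 ≤ z ∧ n = x^2 + y^2 + z^2 := by
  obtain ⟨nn, rfl⟩ : ∃ nn : ℕ, n = nn := ⟨n.toNat, (Int.toNat_of_nonneg (by omega)).symm⟩
  have hmodn : nn % 4 = 1 ∨ nn % 4 = 2 ∨ nn % 8 = 3 := by omega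
  have h3n : 3 ≤ nn := by omega
  obtain ⟨D, N, s, k, hD1, hN2, hNk, hnD⟩ := my_package nn h3n hmodn
  have h3c : (3 : ℤ) ≤ (nn : ℤ) := by exact_mod_cast h3n
  have hk1 : 1 ≤ k := by nlinarith
  have hP : 2 ≤ (nn : ℤ)*k - 1 := by nlinarith
  have hdet : (nn : ℤ)*k*N + 2*1*0*(-s) - (nn : ℤ)*(-s)^2 - k*0^2 - N*1^2 = 1 := by
    linear_combination (nn : ℤ) * hNk + hnD
  have hpos : ∀ x y z : ℤ, ¬(x = 0 ∧ y = 0 ∧ z = 0) →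
      0 < (nn : ℤ)*x^2 + k*y^2 + N*z^2 + 2*1*x*y + 2*0*x*z + 2*(-s)*y*z := by
    intro x y z hnz
    by_contra hq
    push_neg at hq
    have e : ((nn : ℤ)*k - 1) * (nn : ℤ) *
        ((nn : ℤ)*x^2 + k*y^2 + N*z^2 + 2*1*x*y + 2*0*x*z + 2*(-s)*y*z)
        = ((nn : ℤ)*k - 1)*((nn : ℤ)*x + y)^2 + (((nn : ℤ)*k - 1)*y - (nn : ℤ)*s*z)^2
          + (nn : ℤ)*z^2 := by
      linear_combination ((nn : ℤ)^2*z^2) * hNk + ((nn : ℤ)*z^2) * hnD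
    have hA : 0 ≤ ((nn : ℤ)*k - 1)*((nn : ℤ)*x + y)^2 :=
      mul_nonneg (by linarith) (sq_nonneg _)
    have hB : 0 ≤ (((nn : ℤ)*k - 1)*y - (nn : ℤ)*s*z)^2 := sq_nonneg _
    have hPnQ : ((nn : ℤ)*k - 1) * (nn : ℤ) *
        ((nn : ℤ)*x^2 + k*y^2 + N*z^2 + 2*1*x*y + 2*0*x*z + 2*(-s)*y*z) ≤ 0 := by
      have h1 : (0:ℤ) ≤ ((nn : ℤ)*k - 1) * (nn : ℤ) := by nlinarith
      nlinarith [mul_nonneg h1 (neg_nonneg.mpr hq)]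
    -- z = 0
    have hz2 : z^2 ≤ 0 := by nlinarith [hA, hB, e, hPnQ, h3c, sq_nonneg z]
    have hz0 : z = 0 := by
      have := le_antisymm hz2 (sq_nonneg z)
      exact pow_eq_zero_iff (by norm_num) |>.mp this
    subst hz0
    -- y = 0
    have hy2 : y^2 ≤ 0 := by nlinarith [hA, e, hPnQ, hP, sq_nonneg y]
    have hy0 : y = 0 := by
      have := le_antisymm hy2 (sq_nonneg y)
      exact pow_eq_zero_iff (by norm_num) |>.mp this
    subst hy0
    -- x = 0
    have hx2 : x^2 ≤ 0 := by nlinarith [e, hPnQ, hP, h3c, sq_nonneg ((nn : ℤ)*x), sq_nonneg x]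
    have hx0 : x = 0 := by
      have := le_antisymm hx2 (sq_nonneg x)
      exact pow_eq_zero_iff (by norm_num) |>.mp this
    exact hnz ⟨hx0, rfl, rfl⟩
  obtain ⟨X, Y, Z, hXYZ⟩ := my_ternary_main (nn : ℤ) k N 1 0 (-s) hdet hpos (nn : ℤ)
    ⟨1, 0, 0, by ring⟩
  exact ⟨|X|, |Y|, |Z|, abs_nonneg _, abs_nonneg _, abs_nonneg _, by
    rw [sq_abs, sq_abs, sq_abs]; exact hXYZ⟩

theorem stmt_8 (m : ℤ) (hm : 50 ≤ m) :
    (∃ x y z : ℤ, 0 ≤ x ∧ 0 ≤ y ∧ 0 ≤ z ∧ m - 15 = x^2 + y^2 + z^2) ∨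
    (∃ x y z : ℤ, 0 ≤ x ∧ 0 ≤ y ∧ 0 ≤ z ∧ 2 * m - 99 = x^2 + y^2 + z^2) := by
  rcases (by omega : m = 50 ∨ 51 ≤ m) with rfl | hm51
  · exact Or.inl ⟨5, 3, 1, by norm_num⟩
  rcases (by omega : m % 4 = 0 ∨ m % 4 = 1 ∨ m % 4 = 2 ∨ m % 4 = 3) with h | h | h | h
  · exact Or.inl (my_main3sq (m - 15) (by omega) (by left; omega))
  · exact Or.inl (my_main3sq (m - 15) (by omega) (by right; left; omega))
  · exact Or.inr (my_main3sq (2*m - 99) (by omega) (by left; omega))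
  · exact Or.inr (my_main3sq (2*m - 99) (by omega) (by right; right; omega))
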